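/- (Proposition 1) Let D > 0, r_r > 0, r_0 > r_r, k_1 > 0, α = k_1/D + 1/r_r and N_tx ∈ ℕ. Define for T > 0 the cumulative adsorbed fraction of the partial adsorption receiver R_PA(T) = ((r_r α − 1)/(r_0 α)) · (1 + erf((r_r − r_0)/√(4DT)) − exp((r_0 − r_r)α + D T α²) · erfc((r_0 − r_r + 2Dα T)/√(4DT))). Then N_tx·R_PA(T) → N_tx · k_1 r_r² / (r_0 (k_1 r_r + D)) as T → ∞. -/

import Mathlib

open Filter

/-- The error function `erf(x) = (2/√π) ∫₀^x e^{−u²} du`. -/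
noncomputable def erf (x : ℝ) : ℝ :=
  (2 / Real.sqrt Real.pi) * ∫ u in (0 : ℝ)..x, Real.exp (-u ^ 2)

/-- The complementary error function `erfc(x) = 1 − erf(x)`. -/
noncomputable def erfc (x : ℝ) : ℝ := 1 - erf x

/-- Cumulative adsorbed fraction of the partial adsorption receiver. -/
noncomputable def Rpa (D rr r0 α : ℝ) (T : ℝ) : ℝ :=
  ((rr * α - 1) / (r0 * α)) *
    (1 + erf ((rr - r0) / Real.sqrt (4 * D * T)) -
      Real.exp ((r0 - rr) * α + D * T * α ^ 2) *
        erfc ((r0 - rr + 2 * D * α * T) / Real.sqrt (4 * D * T)))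


open MeasureTheory Set

lemma gauss_integrable : MeasureTheory.Integrable (fun u : ℝ => Real.exp (-u ^ 2)) := by
  simpa using integrable_exp_neg_mul_sq (b := 1) one_pos

lemma mul_gauss_integrable : MeasureTheory.Integrable (fun u : ℝ => u * Real.exp (-u ^ 2)) := by
  simpa using integrable_mul_exp_neg_mul_sq (b := 1) one_pos

lemma gauss_tail (x : ℝ) :
    ∫ u in Set.Ioi x, u * Real.exp (-u ^ 2) = Real.exp (-x ^ 2) / 2 := by
  have hderiv : ∀ u ∈ Set.Ici x,
      HasDerivAt (fun u : ℝ => -Real.exp (-u ^ 2) / 2) (u * Real.exp (-u ^ 2)) u := by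
    intro u _
    have h1 : HasDerivAt (fun u : ℝ => -u ^ 2) (-(2 * u ^ 1)) u := (hasDerivAt_pow 2 u).neg
    have h2 := (h1.exp.neg).div_const 2
    exact h2.congr_deriv (by ring)
  have hlim : Tendsto (fun u : ℝ => -Real.exp (-u ^ 2) / 2) atTop (nhds 0) := by
    have h1 : Tendsto (fun u : ℝ => Real.exp (-u ^ 2)) atTop (nhds 0) := by
      have := Real.tendsto_exp_neg_atTop_nhds_zero.comp
        (tendsto_pow_atTop (n := 2) two_ne_zero)
      simpa [Function.comp] using this
    have := (h1.neg).div_const 2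
    simpa using this
  have := MeasureTheory.integral_Ioi_of_hasDerivAt_of_tendsto' hderiv
    mul_gauss_integrable.integrableOn hlim
  rw [this]; ring

lemma erfc_eq {x : ℝ} (hx : 0 ≤ x) :
    erfc x = (2 / Real.sqrt Real.pi) * ∫ u in Set.Ioi x, Real.exp (-u ^ 2) := by
  have hπ : Real.sqrt Real.pi ≠ 0 := by positivity
  have hone : (2 / Real.sqrt Real.pi) * ∫ u in Set.Ioi (0:ℝ), Real.exp (-u ^ 2) = 1 := by
    have h := integral_gaussian_Ioi 1
    simp only [neg_mul, one_mul] at h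
    rw [h]
    field_simp
  have hsplit : (∫ u in Set.Ioi (0:ℝ), Real.exp (-u ^ 2)) =
      (∫ u in Set.Ioc (0:ℝ) x, Real.exp (-u ^ 2)) + ∫ u in Set.Ioi x, Real.exp (-u ^ 2) := by
    rw [← MeasureTheory.setIntegral_union Set.Ioc_disjoint_Ioi_same measurableSet_Ioi
      gauss_integrable.integrableOn gauss_integrable.integrableOn,
      Set.Ioc_union_Ioi_eq_Ioi hx]
  have hival : (∫ u in (0:ℝ)..x, Real.exp (-u ^ 2)) =
      ∫ u in Set.Ioc (0:ℝ) x, Real.exp (-u ^ 2) := intervalIntegral.integral_of_le hx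
  unfold erfc erf
  rw [hival, ← hone, hsplit]
  ring

lemma erfc_nonneg {x : ℝ} (hx : 0 ≤ x) : 0 ≤ erfc x := by
  rw [erfc_eq hx]
  have : 0 ≤ ∫ u in Set.Ioi x, Real.exp (-u ^ 2) :=
    MeasureTheory.setIntegral_nonneg measurableSet_Ioi fun u _ => (Real.exp_pos _).le
  positivity

lemma erfc_le {x : ℝ} (hx : 0 < x) :
    erfc x ≤ Real.exp (-x ^ 2) / (x * Real.sqrt Real.pi) := by
  have hπ : 0 < Real.sqrt Real.pi := Real.sqrt_pos.mpr Real.pi_pos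
  have hmono : (∫ u in Set.Ioi x, Real.exp (-u ^ 2)) ≤
      ∫ u in Set.Ioi x, x⁻¹ * (u * Real.exp (-u ^ 2)) := by
    apply MeasureTheory.setIntegral_mono_on gauss_integrable.integrableOn
      (mul_gauss_integrable.const_mul _).integrableOn measurableSet_Ioi
    intro u hu
    have hu' : x < u := hu
    have h1 : (1:ℝ) ≤ x⁻¹ * u := by
      rw [← div_eq_inv_mul, le_div_iff₀ hx]; linarith
    nlinarith [Real.exp_pos (-u ^ 2)]
  have hval : (∫ u in Set.Ioi x, x⁻¹ * (u * Real.exp (-u ^ 2)))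
      = x⁻¹ * (Real.exp (-x ^ 2) / 2) := by
    rw [MeasureTheory.integral_const_mul, gauss_tail]
  rw [erfc_eq hx.le]
  calc (2 / Real.sqrt Real.pi) * ∫ u in Set.Ioi x, Real.exp (-u ^ 2)
      ≤ (2 / Real.sqrt Real.pi) * (x⁻¹ * (Real.exp (-x ^ 2) / 2)) := by
        rw [← hval]
        exact mul_le_mul_of_nonneg_left hmono (by positivity)
    _ = Real.exp (-x ^ 2) / (x * Real.sqrt Real.pi) := by
        field_simp

lemma exp_sq_mul_erfc_tendsto :
    Tendsto (fun x : ℝ => Real.exp (x ^ 2) * erfc x) atTop (nhds 0) := by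
  have hπ : 0 < Real.sqrt Real.pi := Real.sqrt_pos.mpr Real.pi_pos
  apply squeeze_zero' (g := fun x : ℝ => (x * Real.sqrt Real.pi)⁻¹)
  · filter_upwards [eventually_gt_atTop (0:ℝ)] with x hx
    exact mul_nonneg (Real.exp_pos _).le (erfc_nonneg hx.le)
  · filter_upwards [eventually_gt_atTop (0:ℝ)] with x hx
    calc Real.exp (x ^ 2) * erfc x
        ≤ Real.exp (x ^ 2) * (Real.exp (-x ^ 2) / (x * Real.sqrt Real.pi)) :=
          mul_le_mul_of_nonneg_left (erfc_le hx) (Real.exp_pos _).le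
      _ = (x * Real.sqrt Real.pi)⁻¹ := by
          rw [mul_div_assoc', ← Real.exp_add]
          simp
  · exact (tendsto_id.atTop_mul_const hπ).inv_tendsto_atTop

lemma continuous_erf : Continuous erf := by
  unfold erf
  exact continuous_const.mul
    (intervalIntegral.continuous_primitive (fun a b => gauss_integrable.intervalIntegrable) 0)

lemma erf_zero : erf 0 = 0 := by simp [erf]

lemma sqrt_tendsto_atTop : Tendsto Real.sqrt atTop atTop := by
  refine tendsto_atTop_atTop.mpr fun b => ⟨max 0 b ^ 2, fun x hx => ?_⟩
  calc b ≤ max 0 b := le_max_right _ _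
    _ = Real.sqrt ((max 0 b) ^ 2) := (Real.sqrt_sq (le_max_left _ _)).symm
    _ ≤ Real.sqrt x := Real.sqrt_le_sqrt hx

/-- (Proposition 1) The expected number of molecules adsorbed to the partial
adsorption receiver converges, as `T → ∞`, to `N_tx k₁ r_r²/(r₀(k₁ r_r + D))`. -/
theorem proposition1_partial_adsorption (D rr r0 k1 : ℝ)
    (hD : 0 < D) (hrr : 0 < rr) (hr0 : rr < r0) (hk1 : 0 < k1)
    (α : ℝ) (hα : α = k1 / D + 1 / rr) (Ntx : ℕ) :
    Tendsto (fun T : ℝ => (Ntx : ℝ) * Rpa D rr r0 α T) atTop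
      (nhds ((Ntx : ℝ) * k1 * rr ^ 2 / (r0 * (k1 * rr + D)))) := by

  have hr0' : 0 < r0 := hrr.trans hr0
  have hαpos : 0 < α := by rw [hα]; positivity
  have hc : 0 < r0 - rr := by linarith
  -- sqrt (4*D*T) tends to atTop
  have hsq : Tendsto (fun T : ℝ => Real.sqrt (4 * D * T)) atTop atTop :=
    sqrt_tendsto_atTop.comp (tendsto_id.const_mul_atTop (by positivity : (0:ℝ) < 4 * D))
  -- limit 1 : erf part
  have limit1 : Tendsto (fun T : ℝ => erf ((rr - r0) / Real.sqrt (4 * D * T)))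
      atTop (nhds 0) := by
    have hinner : Tendsto (fun T : ℝ => (rr - r0) / Real.sqrt (4 * D * T)) atTop (nhds 0) := by
      simp only [div_eq_mul_inv]
      simpa using (hsq.inv_tendsto_atTop).const_mul (rr - r0)
    have := (continuous_erf.tendsto 0).comp hinner
    simpa [erf_zero, Function.comp_def] using this
  -- limit 2 : exp * erfc part
  set y : ℝ → ℝ := fun T => (r0 - rr + 2 * D * α * T) / Real.sqrt (4 * D * T) with hy_def
  have hy : Tendsto y atTop atTop := by
    have heq : ∀ᶠ T in atTop, (r0 - rr) * (Real.sqrt (4 * D * T))⁻¹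
        + α * Real.sqrt D * Real.sqrt T = y T := by
      filter_upwards [eventually_gt_atTop (0:ℝ)] with T hT
      have h4 : Real.sqrt (4 * D * T) = 2 * Real.sqrt D * Real.sqrt T := by
        rw [show (4:ℝ) * D * T = (2 * Real.sqrt D * Real.sqrt T) ^ 2 by
          have hD2 : Real.sqrt D ^ 2 = D := Real.sq_sqrt hD.le
          have hT2 : Real.sqrt T ^ 2 = T := Real.sq_sqrt hT.le
          nlinarith [hD2, hT2]]
        exact Real.sqrt_sq (by positivity)
      have hDpos : 0 < Real.sqrt D := Real.sqrt_pos.mpr hD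
      have hTpos : 0 < Real.sqrt T := Real.sqrt_pos.mpr hT
      have hD2 : Real.sqrt D * Real.sqrt D = D := Real.mul_self_sqrt hD.le
      have hT2 : Real.sqrt T * Real.sqrt T = T := Real.mul_self_sqrt hT.le
      rw [hy_def]
      simp only [h4]
      field_simp
      linear_combination (2 * α * (Real.sqrt T * Real.sqrt T)) * hD2 + (2 * α * D) * hT2
    have h1 : Tendsto (fun T : ℝ => (r0 - rr) * (Real.sqrt (4 * D * T))⁻¹
        + α * Real.sqrt D * Real.sqrt T) atTop atTop := by
      apply Filter.Tendsto.nonneg_add_atTop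
      · intro T
        have : 0 ≤ (Real.sqrt (4 * D * T))⁻¹ := by positivity
        have := mul_nonneg hc.le this
        linarith
      · exact sqrt_tendsto_atTop.const_mul_atTop (by positivity)
    exact Tendsto.congr' heq h1
  have limit2 : Tendsto (fun T : ℝ =>
      Real.exp ((r0 - rr) * α + D * T * α ^ 2) * erfc (y T)) atTop (nhds 0) := by
    have hEeq : ∀ᶠ T in atTop,
        Real.exp (-(r0 - rr) ^ 2 / (4 * D * T)) * (Real.exp ((y T) ^ 2) * erfc (y T))
        = Real.exp ((r0 - rr) * α + D * T * α ^ 2) * erfc (y T) := by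
      filter_upwards [eventually_gt_atTop (0:ℝ)] with T hT
      have hexp : Real.exp (-(r0 - rr) ^ 2 / (4 * D * T)) * Real.exp ((y T) ^ 2)
          = Real.exp ((r0 - rr) * α + D * T * α ^ 2) := by
        rw [← Real.exp_add]
        congr 1
        rw [hy_def]
        simp only [div_pow, Real.sq_sqrt (by positivity : (0:ℝ) ≤ 4 * D * T)]
        field_simp
        ring
      rw [← mul_assoc, hexp]
    have h1 : Tendsto (fun T : ℝ => Real.exp (-(r0 - rr) ^ 2 / (4 * D * T)))
        atTop (nhds 1) := by
      have hin : Tendsto (fun T : ℝ => -(r0 - rr) ^ 2 / (4 * D * T)) atTop (nhds 0) := by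
        have heq : (fun T : ℝ => -(r0 - rr) ^ 2 / (4 * D * T))
            = fun T => (-(r0 - rr) ^ 2 / (4 * D)) * T⁻¹ := by
          funext T
          rw [div_eq_mul_inv, div_eq_mul_inv, mul_inv, ← mul_assoc]
        rw [heq]
        have h0 := tendsto_inv_atTop_zero.const_mul (-(r0 - rr) ^ 2 / (4 * D))
        rwa [mul_zero] at h0
      simpa [Function.comp_def] using (Real.continuous_exp.tendsto 0).comp hin
    have h2 : Tendsto (fun T : ℝ => Real.exp ((y T) ^ 2) * erfc (y T)) atTop (nhds 0) :=
      exp_sq_mul_erfc_tendsto.comp hy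
    have := h1.mul h2
    rw [mul_zero] at this
    exact Tendsto.congr' hEeq this
  -- assemble
  have hbracket : Tendsto (fun T : ℝ =>
      1 + erf ((rr - r0) / Real.sqrt (4 * D * T)) -
        Real.exp ((r0 - rr) * α + D * T * α ^ 2) * erfc (y T)) atTop (nhds 1) := by
    have := (tendsto_const_nhds (x := (1:ℝ)) (f := atTop)).add limit1 |>.sub limit2
    simpa using this
  have hmain : Tendsto (fun T : ℝ => (Ntx : ℝ) * Rpa D rr r0 α T) atTop
      (nhds ((Ntx : ℝ) * ((rr * α - 1) / (r0 * α)))) := by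
    have h := (hbracket.const_mul ((rr * α - 1) / (r0 * α))).const_mul (Ntx : ℝ)
    simp only [mul_one] at h
    exact h
  have hC : (Ntx : ℝ) * ((rr * α - 1) / (r0 * α))
      = (Ntx : ℝ) * k1 * rr ^ 2 / (r0 * (k1 * rr + D)) := by
    subst hα
    have h1 : k1 * rr + D ≠ 0 := by positivity
    field_simp
    ring
  rwa [hC] at hmain
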